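/- For an index coding problem H over F_q, concatenating a scalar linear index code of length κ_q(H) (given by matrix L ∈ F_q^{n×κ}) with a linear [n', κ_q(H), 2δ+1]_q error-correcting code with generator matrix G yields a δ-error-correcting index code of length n': i.e., if XL determines the demands of all receivers given their side information, then from any vector (XL)G + e with wt(e) ≤ δ, together with side information, each receiver can recover its demanded message. -/

import Mathlib

/-- Concatenating a valid scalar linear index code `L` (from which every receiver can
decode its demand using its side information) with a generator matrix `G` of a linear
code of minimum distance `2δ+1` yields a `δ`-error-correcting index code: every receiver
can decode its demand from `(XL)G + e` (with `wt(e) ≤ δ`) and its side information. -/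
theorem stmt16 {F : Type*} [Field F] [DecidableEq F] {n K κ n' δ : ℕ}
    (X : Fin K → Finset (Fin n)) (f : Fin K → Fin n) (hf : ∀ i, f i ∉ X i)
    (L : Matrix (Fin n) (Fin κ) F)
    (hL : ∀ i : Fin K, ∃ D : (Fin κ → F) → ({j : Fin n // j ∈ X i} → F) → F,
      ∀ x : Fin n → F, D (Matrix.vecMul x L) (fun j => x j.1) = x (f i))
    (G : Matrix (Fin κ) (Fin n') F)
    (hG : ∀ y : Fin κ → F, y ≠ 0 → 2 * δ + 1 ≤ hammingNorm (Matrix.vecMul y G)) :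
    ∀ i : Fin K, ∃ D : (Fin n' → F) → ({j : Fin n // j ∈ X i} → F) → F,
      ∀ (x : Fin n → F) (e : Fin n' → F), hammingNorm e ≤ δ →
        D (Matrix.vecMul (Matrix.vecMul x L) G + e) (fun j => x j.1) = x (f i) := by
  classical
  intro i
  obtain ⟨D, hD⟩ := hL i
  -- decoder for the inner code
  set dec : (Fin n' → F) → (Fin κ → F) := fun w =>
    if h : ∃ y : Fin κ → F, hammingDist (Matrix.vecMul y G) w ≤ δ then h.choose else 0
    with hdec
  have key : ∀ (y : Fin κ → F) (e : Fin n' → F), hammingNorm e ≤ δ →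
      dec (Matrix.vecMul y G + e) = y := by
    intro y e he
    have hex : ∃ y' : Fin κ → F,
        hammingDist (Matrix.vecMul y' G) (Matrix.vecMul y G + e) ≤ δ := by
      refine ⟨y, ?_⟩
      rw [hammingDist_eq_hammingNorm]
      have : Matrix.vecMul y G - (Matrix.vecMul y G + e) = -e := by abel
      rw [show -Matrix.vecMul y G + (Matrix.vecMul y G + e) = e by abel]
      have hneg : hammingNorm (-e) = hammingNorm e := by simp [hammingNorm, neg_eq_zero]
      exact he
    have hspec := hex.choose_spec
    set y' := hex.choose with hy'
    have hxy : hammingDist (Matrix.vecMul y G) (Matrix.vecMul y G + e) ≤ δ := by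
      rw [hammingDist_eq_hammingNorm]
      have : Matrix.vecMul y G - (Matrix.vecMul y G + e) = -e := by abel
      rw [show -Matrix.vecMul y G + (Matrix.vecMul y G + e) = e by abel]
      have hneg : hammingNorm (-e) = hammingNorm e := by simp [hammingNorm, neg_eq_zero]
      exact he
    by_contra hne
    have hne' : dec (Matrix.vecMul y G + e) ≠ y := hne
    have hdecval : dec (Matrix.vecMul y G + e) = y' := by
      simp [hdec, dif_pos hex, hy']
    rw [hdecval] at hne'
    have hsub : y' - y ≠ 0 := sub_ne_zero.mpr hne'
    have h1 : 2 * δ + 1 ≤ hammingNorm (Matrix.vecMul (y' - y) G) := hG _ hsub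
    have h2 : hammingNorm (Matrix.vecMul (y' - y) G) =
        hammingDist (Matrix.vecMul y' G) (Matrix.vecMul y G) := by
      rw [Matrix.sub_vecMul, hammingDist_eq_hammingNorm]
      simp [hammingNorm, sub_eq_zero, neg_add_eq_zero]
    have h3 : hammingDist (Matrix.vecMul y' G) (Matrix.vecMul y G) ≤ 2 * δ := by
      calc hammingDist (Matrix.vecMul y' G) (Matrix.vecMul y G)
          ≤ hammingDist (Matrix.vecMul y' G) (Matrix.vecMul y G + e)
            + hammingDist (Matrix.vecMul y G + e) (Matrix.vecMul y G) :=
            hammingDist_triangle _ _ _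
        _ ≤ δ + δ := add_le_add hspec (by rwa [hammingDist_comm])
        _ = 2 * δ := by ring
    omega
  refine ⟨fun w s => D (dec w) s, ?_⟩
  intro x e he
  simp only
  rw [key _ e he, hD]
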